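/- Kleene star lower bound witness: let m ≥ 2 and, over the alphabet {a,b}, let L = { b a^{k(m-1)} : k ≥ 0 }. Then L is suffix-free, NSC(L) = m, and NSC(L*) = m. -/

import Mathlib

open Computability

/-- A nondeterministic finite automaton with a single start state and
no ε-transitions. -/
structure SNFA (α : Type) (σ : Type) where
  step : σ → α → Set σ
  start : σ
  accept : Set σ

namespace SNFA

variable {α σ : Type}

/-- The set of states reachable from some state in `S` by one transition on `a`. -/
def stepSet (M : SNFA α σ) (S : Set σ) (a : α) : Set σ :=
  ⋃ s ∈ S, M.step s a

/-- The set of states reachable from the set `S` of states by reading the word `w`. -/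
def evalFrom (M : SNFA α σ) (S : Set σ) (w : List α) : Set σ :=
  w.foldl M.stepSet S

/-- The language accepted by `M`: all words spelled out by a path
from the start state to an accepting state. -/
def accepts (M : SNFA α σ) : Language α :=
  {w | ∃ q ∈ M.accept, q ∈ M.evalFrom {M.start} w}

end SNFA

/-- A language is suffix-free if no word of the language is a proper suffix
of another word of the language. -/
def SuffixFree {α : Type} (L : Language α) : Prop :=
  ∀ u v : List α, u ∈ L → v ∈ L → u <:+ v → u = v

/-- `NSCle L k`: there is an NFA with at most `k` states accepting `L`
(so the nondeterministic state complexity of `L` is at most `k`). -/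
def NSCle {α : Type} (L : Language α) (k : ℕ) : Prop :=
  ∃ (σ : Type) (x : Fintype σ) (M : SNFA α σ), M.accepts = L ∧ @Fintype.card σ x ≤ k

/-- `NSCge L k`: every NFA accepting `L` has at least `k` states
(so the nondeterministic state complexity of `L` is at least `k`). -/
def NSCge {α : Type} (L : Language α) (k : ℕ) : Prop :=
  ∀ (σ : Type) [Fintype σ] (M : SNFA α σ), M.accepts = L → k ≤ Fintype.card σ

/-- `NSCeq L m`: the nondeterministic state complexity of `L` is exactly `m`:
some NFA with `m` states accepts `L` and every NFA accepting `L` has at least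
`m` states. -/
def NSCeq {α : Type} (L : Language α) (m : ℕ) : Prop :=
  NSCle L m ∧ NSCge L m

/-- The language `b(a^{m-1})*` over `{a, b}` (encoded as `a = 0`, `b = 1`). -/
def starLang (m : ℕ) : Language (Fin 2) :=
  {w | ∃ k : ℕ, w = 1 :: List.replicate (k * (m - 1)) 0}


namespace SNFA

variable {α σ : Type}

theorem mem_stepSet {M : SNFA α σ} {S : Set σ} {a : α} {q : σ} :
    q ∈ M.stepSet S a ↔ ∃ p ∈ S, q ∈ M.step p a := by
  simp [stepSet]

theorem stepSet_singleton (M : SNFA α σ) (p : σ) (a : α) :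
    M.stepSet {p} a = M.step p a := by
  simp [stepSet]

theorem evalFrom_nil (M : SNFA α σ) (S : Set σ) : M.evalFrom S [] = S := rfl

theorem evalFrom_cons (M : SNFA α σ) (S : Set σ) (a : α) (w : List α) :
    M.evalFrom S (a :: w) = M.evalFrom (M.stepSet S a) w := rfl

theorem evalFrom_single (M : SNFA α σ) (S : Set σ) (a : α) :
    M.evalFrom S [a] = M.stepSet S a := rfl

theorem evalFrom_append (M : SNFA α σ) (S : Set σ) (u v : List α) :
    M.evalFrom S (u ++ v) = M.evalFrom (M.evalFrom S u) v :=
  List.foldl_append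

theorem stepSet_mono (M : SNFA α σ) {S T : Set σ} (h : S ⊆ T) (a : α) :
    M.stepSet S a ⊆ M.stepSet T a := by
  intro q hq
  rcases mem_stepSet.1 hq with ⟨p, hp, hq⟩
  exact mem_stepSet.2 ⟨p, h hp, hq⟩

theorem evalFrom_mono (M : SNFA α σ) {S T : Set σ} (h : S ⊆ T) (w : List α) :
    M.evalFrom S w ⊆ M.evalFrom T w := by
  induction w generalizing S T with
  | nil => exact h
  | cons c w ih => exact ih (M.stepSet_mono h c)

theorem exists_mem_of_evalFrom (M : SNFA α σ) {S : Set σ} {w : List α} {q : σ}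
    (h : q ∈ M.evalFrom S w) : ∃ p ∈ S, q ∈ M.evalFrom {p} w := by
  induction w generalizing S with
  | nil => exact ⟨q, h, rfl⟩
  | cons c w ih =>
    rw [evalFrom_cons] at h
    obtain ⟨p', hp', hq⟩ := ih h
    obtain ⟨p, hp, hp'⟩ := mem_stepSet.1 hp'
    refine ⟨p, hp, ?_⟩
    rw [evalFrom_cons, stepSet_singleton]
    exact M.evalFrom_mono (Set.singleton_subset_iff.2 hp') w hq

theorem card_ge_of_fooling {σ : Type} [Fintype σ] {α : Type} (M : SNFA α σ) {m : ℕ}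
    (u v : Fin m → List α)
    (hd : ∀ i, u i ++ v i ∈ M.accepts)
    (hc : ∀ i j, i ≠ j → u i ++ v j ∉ M.accepts ∨ u j ++ v i ∉ M.accepts) :
    m ≤ Fintype.card σ := by
  have key : ∀ i : Fin m, ∃ p, p ∈ M.evalFrom {M.start} (u i) ∧
      ∃ q ∈ M.accept, q ∈ M.evalFrom {p} (v i) := by
    intro i
    obtain ⟨q, hq, hq'⟩ := hd i
    rw [M.evalFrom_append] at hq'
    obtain ⟨p, hp, hq'⟩ := M.exists_mem_of_evalFrom hq'
    exact ⟨p, hp, q, hq, hq'⟩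
  choose f hf1 hf2 using key
  have glue : ∀ a b : Fin m, f a = f b → u a ++ v b ∈ M.accepts := by
    intro a b hab
    obtain ⟨q, hq, hq'⟩ := hf2 b
    refine ⟨q, hq, ?_⟩
    rw [M.evalFrom_append]
    refine M.evalFrom_mono (Set.singleton_subset_iff.2 ?_) (v b) hq'
    rw [← hab]; exact hf1 a
  have hinj : Function.Injective f := by
    intro i j hij
    by_contra hne
    rcases hc i j hne with h | h
    · exact h (glue i j hij)
    · exact h (glue j i hij.symm)
  simpa using Fintype.card_le_of_injective f hinj

end SNFA

section LangLemmas

theorem fin2_cases : ∀ c : Fin 2, c = 0 ∨ c = 1 := by decide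

theorem one_replicate_mem {m t : ℕ} :
    (1 :: List.replicate t 0 : List (Fin 2)) ∈ starLang m ↔ (m - 1) ∣ t := by
  constructor
  · rintro ⟨k, hk⟩
    have hlen := congrArg List.length hk
    simp only [List.length_cons, List.length_replicate] at hlen
    exact ⟨k, by rw [Nat.mul_comm]; omega⟩
  · rintro ⟨k, rfl⟩
    exact ⟨k, by rw [Nat.mul_comm]⟩

theorem replicate_not_mem {m s : ℕ} : (List.replicate s 0 : List (Fin 2)) ∉ starLang m := by
  rintro ⟨k, hk⟩
  cases s with
  | zero => simp at hk
  | succ s =>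
    rw [List.replicate_succ] at hk
    injection hk with h1 _
    exact absurd h1 (by decide)

theorem flatten_head {m : ℕ} {S : List (List (Fin 2))} (hS : ∀ x ∈ S, x ∈ starLang m) :
    S.flatten = [] ∨ ∃ w', S.flatten = 1 :: w' := by
  cases S with
  | nil => left; rfl
  | cons x S =>
    obtain ⟨k, rfl⟩ := hS x (List.mem_cons_self)
    right
    exact ⟨_, by rw [List.flatten_cons, List.cons_append]⟩

theorem kstar_head {m : ℕ} {w : List (Fin 2)} (h : w ∈ (starLang m)∗) :
    w = [] ∨ ∃ w', w = 1 :: w' := by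
  rw [Language.mem_kstar] at h
  obtain ⟨S, rfl, hS⟩ := h
  exact flatten_head hS

theorem one_replicate_mem_kstar {m t : ℕ} (hm : 2 ≤ m) :
    (1 :: List.replicate t 0 : List (Fin 2)) ∈ (starLang m)∗ ↔ (m - 1) ∣ t := by
  constructor
  · intro h
    rw [Language.mem_kstar] at h
    obtain ⟨S, hw, hS⟩ := h
    clear hm
    induction S generalizing t with
    | nil => simp at hw
    | cons x S ih =>
      obtain ⟨k, rfl⟩ := hS x (List.mem_cons_self)
      rw [List.flatten_cons, List.cons_append, List.cons.injEq] at hw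
      replace hw := hw.2.symm
      -- hw : replicate (k*(m-1)) 0 ++ S.flatten = replicate t 0
      rcases flatten_head (fun y hy => hS y (List.mem_cons_of_mem _ hy)) with hnil | ⟨w', hw'⟩
      · rw [hnil, List.append_nil] at hw
        have := congrArg List.length hw
        simp only [List.length_replicate] at this
        exact ⟨k, by rw [Nat.mul_comm]; omega⟩
      · exfalso
        have h1 : (1 : Fin 2) ∈ List.replicate t (0 : Fin 2) := by
          rw [← hw, hw']
          exact List.mem_append_right _ (List.mem_cons_self)
        exact absurd (List.eq_of_mem_replicate h1) (by decide)
  · intro h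
    rw [Language.mem_kstar]
    exact ⟨[1 :: List.replicate t 0], by simp, by
      intro y hy
      rw [List.mem_singleton] at hy
      rw [hy]
      exact one_replicate_mem.2 h⟩

theorem kstar_append_mem {m : ℕ} {u x : List (Fin 2)} (hu : u ∈ (starLang m)∗)
    (hx : x ∈ starLang m) : u ++ x ∈ (starLang m)∗ := by
  rw [Language.mem_kstar] at hu ⊢
  obtain ⟨S, rfl, hS⟩ := hu
  refine ⟨S ++ [x], by simp, ?_⟩
  intro y hy
  rcases List.mem_append.1 hy with h | h
  · exact hS y h
  · rw [List.mem_singleton] at h; rw [h]; exact hx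

theorem kstar_split {m : ℕ} {w : List (Fin 2)} (hw : w ∈ (starLang m)∗) (hne : w ≠ []) :
    ∃ u t, w = u ++ 1 :: List.replicate t 0 ∧ u ∈ (starLang m)∗ ∧ (m - 1) ∣ t := by
  rw [Language.mem_kstar] at hw
  obtain ⟨S, rfl, hS⟩ := hw
  have hSne : S ≠ [] := by rintro rfl; exact hne rfl
  have hsplit := List.dropLast_append_getLast hSne
  obtain ⟨k, hk⟩ := hS _ (List.getLast_mem hSne)
  refine ⟨S.dropLast.flatten, k * (m - 1), ?_, ?_, ⟨k, Nat.mul_comm _ _⟩⟩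
  · conv_lhs => rw [← hsplit]
    rw [List.flatten_append, hk]
    simp
  · rw [Language.mem_kstar]
    exact ⟨S.dropLast, rfl, fun y hy => hS y (List.dropLast_subset _ hy)⟩

theorem not_dvd_helper {n s : ℕ} (h1 : 1 ≤ s) (h2 : s ≤ 2 * n - 1) (h3 : s ≠ n) : ¬ n ∣ s := by
  intro hd
  have hn : n ≤ s := Nat.le_of_dvd (by omega) hd
  have hd2 : n ∣ (s - n) := Nat.dvd_sub hd dvd_rfl
  have : n ≤ s - n := Nat.le_of_dvd (by omega) hd2
  omega

theorem nsc_lower {m : ℕ} (hm : 2 ≤ m) (L : Language (Fin 2))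
    (hmem : ∀ k, (1 :: List.replicate (k * (m - 1)) 0 : List (Fin 2)) ∈ L)
    (hrep : ∀ s, 1 ≤ s → (List.replicate s 0 : List (Fin 2)) ∉ L)
    (hnd : ∀ t, ¬ (m - 1) ∣ t → (1 :: List.replicate t 0 : List (Fin 2)) ∉ L) :
    NSCge L m := by
  intro σ _ M hM
  subst hM
  apply M.card_ge_of_fooling
    (fun i : Fin m => if i.val = 0 then [] else 1 :: List.replicate (i.val - 1) 0)
    (fun i : Fin m => if i.val = 0 then [1] else List.replicate (m - i.val) 0)
  · intro i
    by_cases hi : i.val = 0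
    · simp only [hi, if_pos]
      simpa using hmem 0
    · simp only [if_neg hi, List.cons_append, ← List.replicate_add]
      have hieq : i.val - 1 + (m - i.val) = 1 * (m - 1) := by
        have := i.isLt; omega
      rw [hieq]
      exact hmem 1
  · intro i j hne
    have hij : i.val ≠ j.val := fun h => hne (Fin.ext h)
    by_cases hi : i.val = 0
    · left
      have hj : ¬ j.val = 0 := by omega
      simp only [hi, if_pos, if_neg hj, List.nil_append]
      exact hrep _ (by have := j.isLt; omega)
    · by_cases hj : j.val = 0
      · right
        simp only [hj, if_pos, if_neg hi, List.nil_append]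
        exact hrep _ (by have := i.isLt; omega)
      · left
        simp only [if_neg hi, if_neg hj, List.cons_append, ← List.replicate_add]
        apply hnd
        apply not_dvd_helper
        · have := j.isLt; omega
        · have := i.isLt; have := j.isLt; omega
        · have := i.isLt; have := j.isLt; omega

end LangLemmas

section Automata

open Fin.NatCast

/-- NFA for `b (a^n)*` with states `Option (Fin n)`. -/
def MA (n : ℕ) [NeZero n] : SNFA (Fin 2) (Option (Fin n)) where
  step q c :=
    match q with
    | none => if c = 1 then {some 0} else ∅
    | some j => if c = 0 then {some (j + 1)} else ∅
  start := none
  accept := {some 0}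

/-- NFA for `(b (a^n)*)∗` with states `Option (Fin n)`. -/
def MB (n : ℕ) [NeZero n] : SNFA (Fin 2) (Option (Fin n)) where
  step q c :=
    match q with
    | none => if c = 1 then {some 0} else ∅
    | some j => if c = 0 then {some (j + 1)} else if j = 0 then {some 0} else ∅
  start := none
  accept := {none, some 0}

variable {n : ℕ} [NeZero n]

theorem MA_none_zero : (MA n).step none 0 = ∅ := by
  show (if (0 : Fin 2) = 1 then {some 0} else ∅) = ∅
  rw [if_neg (by decide)]

theorem MA_none_one : (MA n).step none 1 = {some 0} := by
  show (if (1 : Fin 2) = 1 then {some 0} else ∅) = {some 0}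
  rw [if_pos rfl]

theorem MA_some_zero (j : Fin n) : (MA n).step (some j) 0 = {some (j + 1)} := by
  show (if (0 : Fin 2) = 0 then {some (j + 1)} else ∅) = {some (j + 1)}
  rw [if_pos rfl]

theorem MA_some_one (j : Fin n) : (MA n).step (some j) 1 = ∅ := by
  show (if (1 : Fin 2) = 0 then {some (j + 1)} else ∅) = ∅
  rw [if_neg (by decide)]

theorem MB_none_zero : (MB n).step none 0 = ∅ := by
  show (if (0 : Fin 2) = 1 then {some 0} else ∅) = ∅
  rw [if_neg (by decide)]

theorem MB_none_one : (MB n).step none 1 = {some 0} := by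
  show (if (1 : Fin 2) = 1 then {some 0} else ∅) = {some 0}
  rw [if_pos rfl]

theorem MB_some_zero (j : Fin n) : (MB n).step (some j) 0 = {some (j + 1)} := by
  show (if (0 : Fin 2) = 0 then {some (j + 1)} else if j = 0 then {some 0} else ∅) = {some (j + 1)}
  rw [if_pos rfl]

theorem MB_some_one (j : Fin n) :
    (MB n).step (some j) 1 = if j = 0 then {some 0} else ∅ := by
  show (if (1 : Fin 2) = 0 then {some (j + 1)} else if j = 0 then {some 0} else ∅) = _
  rw [if_neg (by decide)]

/-- Reading a block of `a`s from a `some` state, for any automaton with the cyclic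
`a`-transitions. -/
theorem eval_zeros (M : SNFA (Fin 2) (Option (Fin n)))
    (hstep : ∀ j : Fin n, M.step (some j) 0 = {some (j + 1)}) :
    ∀ (t : ℕ) (j : Fin n),
      M.evalFrom {some j} (List.replicate t 0) = {some (j + (t : Fin n))} := by
  intro t
  induction t with
  | zero => intro j; simp [SNFA.evalFrom]
  | succ t ih =>
    intro j
    rw [List.replicate_succ, SNFA.evalFrom_cons, SNFA.stepSet_singleton, hstep, ih (j + 1)]
    have : j + 1 + (t : Fin n) = j + ((t + 1 : ℕ) : Fin n) := by
      push_cast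
      abel
    rw [this]

theorem MA_eval {w : List (Fin 2)} {q : Option (Fin n)}
    (h : q ∈ (MA n).evalFrom {none} w) :
    (q = none ∧ w = []) ∨ ∃ t : ℕ, w = 1 :: List.replicate t 0 ∧ q = some (t : Fin n) := by
  induction w using List.reverseRecOn generalizing q with
  | nil => exact Or.inl ⟨h, rfl⟩
  | append_singleton w c ih =>
    rw [SNFA.evalFrom_append, SNFA.evalFrom_single] at h
    obtain ⟨p, hp, hq⟩ := SNFA.mem_stepSet.1 h
    rcases ih hp with ⟨rfl, rfl⟩ | ⟨t, rfl, rfl⟩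
    · rcases fin2_cases c with rfl | rfl
      · rw [MA_none_zero] at hq; exact absurd hq (Set.notMem_empty q)
      · rw [MA_none_one] at hq
        right
        exact ⟨0, by simp, by simpa using hq⟩
    · rcases fin2_cases c with rfl | rfl
      · rw [MA_some_zero] at hq
        right
        refine ⟨t + 1, ?_, ?_⟩
        · rw [List.cons_append, ← List.replicate_succ']
        · rw [hq]
          push_cast
          rfl
      · rw [MA_some_one] at hq; exact absurd hq (Set.notMem_empty q)

theorem MB_eval {w : List (Fin 2)} {q : Option (Fin n)}
    (h : q ∈ (MB n).evalFrom {none} w) :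
    (q = none ∧ w = []) ∨ ∃ u t, w = u ++ 1 :: List.replicate t 0 ∧
      u ∈ (starLang (n + 1))∗ ∧ q = some (t : Fin n) := by
  induction w using List.reverseRecOn generalizing q with
  | nil => exact Or.inl ⟨h, rfl⟩
  | append_singleton w c ih =>
    rw [SNFA.evalFrom_append, SNFA.evalFrom_single] at h
    obtain ⟨p, hp, hq⟩ := SNFA.mem_stepSet.1 h
    rcases ih hp with ⟨rfl, rfl⟩ | ⟨u, t, rfl, hu, rfl⟩
    · rcases fin2_cases c with rfl | rfl
      · rw [MB_none_zero] at hq; exact absurd hq (Set.notMem_empty q)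
      · rw [MB_none_one] at hq
        right
        refine ⟨[], 0, by simp, ?_, by simpa using hq⟩
        exact Language.nil_mem_kstar _
    · rcases fin2_cases c with rfl | rfl
      · rw [MB_some_zero] at hq
        right
        refine ⟨u, t + 1, ?_, hu, ?_⟩
        · rw [List.append_assoc, List.cons_append, ← List.replicate_succ']
        · rw [hq]; push_cast; rfl
      · rw [MB_some_one] at hq
        by_cases h0 : (t : Fin n) = 0
        · rw [if_pos h0] at hq
          right
          have hdvd : n ∣ t := Fin.natCast_eq_zero.1 h0
          refine ⟨u ++ 1 :: List.replicate t 0, 0, by simp, ?_, by simpa using hq⟩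
          apply kstar_append_mem hu
          exact one_replicate_mem.2 (by simpa using hdvd)
        · rw [if_neg h0] at hq; exact absurd hq (Set.notMem_empty q)

end Automata

section AutomataAccept

open Fin.NatCast

variable {n : ℕ} [NeZero n]

theorem MA_eval_word (k : ℕ) :
    (MA n).evalFrom {none} (1 :: List.replicate (k * n) 0) = {some 0} := by
  rw [SNFA.evalFrom_cons, SNFA.stepSet_singleton, MA_none_one,
    eval_zeros (MA n) MA_some_zero]
  have : ((k * n : ℕ) : Fin n) = 0 := Fin.natCast_eq_zero.2 ⟨k, Nat.mul_comm _ _⟩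
  rw [this, add_zero]

theorem MA_accepts : (MA n).accepts = starLang (n + 1) := by
  ext w
  constructor
  · rintro ⟨q, hq, hqe⟩
    rw [show (MA n).accept = {some 0} from rfl, Set.mem_singleton_iff] at hq
    subst hq
    rcases MA_eval hqe with ⟨h, _⟩ | ⟨t, rfl, hcast⟩
    · exact absurd h (by simp)
    · have : ((t : ℕ) : Fin n) = 0 := by
        injection hcast.symm
      obtain ⟨k, rfl⟩ := Fin.natCast_eq_zero.1 this
      exact ⟨k, by rw [Nat.mul_comm]; simp⟩
  · rintro ⟨k, rfl⟩
    refine ⟨some 0, rfl, ?_⟩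
    show (some 0 : Option (Fin n)) ∈ (MA n).evalFrom {none} _
    have h : k * (n + 1 - 1) = k * n := by simp
    rw [h, MA_eval_word]
    rfl

theorem MB_eval_word (S : Set (Option (Fin n))) (hS : some 0 ∈ S) (k : ℕ) :
    some (0 : Fin n) ∈ (MB n).evalFrom S (1 :: List.replicate (k * n) 0) := by
  have h1 : (MB n).evalFrom {some 0} (1 :: List.replicate (k * n) 0) = {some 0} := by
    rw [SNFA.evalFrom_cons, SNFA.stepSet_singleton, MB_some_one, if_pos rfl,
      eval_zeros (MB n) MB_some_zero]
    have : ((k * n : ℕ) : Fin n) = 0 := Fin.natCast_eq_zero.2 ⟨k, Nat.mul_comm _ _⟩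
    rw [this, add_zero]
  have := (MB n).evalFrom_mono (Set.singleton_subset_iff.2 hS)
    (1 :: List.replicate (k * n) 0) (by rw [h1]; rfl)
  exact this

theorem MB_eval_word' (k : ℕ) :
    some (0 : Fin n) ∈ (MB n).evalFrom {none} (1 :: List.replicate (k * n) 0) := by
  rw [SNFA.evalFrom_cons, SNFA.stepSet_singleton, MB_none_one,
    eval_zeros (MB n) MB_some_zero]
  have : ((k * n : ℕ) : Fin n) = 0 := Fin.natCast_eq_zero.2 ⟨k, Nat.mul_comm _ _⟩
  rw [this, add_zero]
  rfl

theorem MB_flatten (S : List (List (Fin 2))) (hS : ∀ x ∈ S, x ∈ starLang (n + 1)) :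
    S.flatten = [] ∨ some (0 : Fin n) ∈ (MB n).evalFrom {none} S.flatten := by
  induction S using List.reverseRecOn with
  | nil => exact Or.inl rfl
  | append_singleton S x ih =>
    right
    obtain ⟨k, rfl⟩ := hS x (by simp)
    have hk : k * (n + 1 - 1) = k * n := by simp
    rw [List.flatten_append, List.flatten_cons, List.flatten_nil, List.append_nil,
      SNFA.evalFrom_append, hk]
    rcases ih (fun y hy => hS y (List.mem_append_left _ hy)) with hnil | h0
    · rw [hnil, SNFA.evalFrom_nil]
      exact MB_eval_word' k
    · exact MB_eval_word _ h0 k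

theorem MB_accepts (hn : n ≠ 0) : (MB n).accepts = (starLang (n + 1))∗ := by
  ext w
  constructor
  · rintro ⟨q, hq, hqe⟩
    rcases MB_eval hqe with ⟨rfl, rfl⟩ | ⟨u, t, rfl, hu, rfl⟩
    · exact Language.nil_mem_kstar _
    · rw [show (MB n).accept = {none, some 0} from rfl] at hq
      rcases hq with hq | hq
      · exact absurd hq (by simp)
      · rw [Set.mem_singleton_iff] at hq
        have : ((t : ℕ) : Fin n) = 0 := by injection hq
        have hdvd : n ∣ t := Fin.natCast_eq_zero.1 this
        exact kstar_append_mem hu (one_replicate_mem.2 (by simpa using hdvd))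
  · intro hw
    rw [Language.mem_kstar] at hw
    obtain ⟨S, rfl, hS⟩ := hw
    rcases MB_flatten S hS with hnil | h0
    · rw [hnil]
      exact ⟨none, Or.inl rfl, rfl⟩
    · exact ⟨some 0, Or.inr rfl, h0⟩

end AutomataAccept

/-- **Kleene star, lower bound witness.** For `m ≥ 2`, the language
`L = b(a^{m-1})*` over `{a, b}` is suffix-free, `NSC(L) = m`, and
`NSC(L∗) = m`. -/
theorem kstar_lower_witness (m : ℕ) (hm : 2 ≤ m) :
    SuffixFree (starLang m) ∧ NSCeq (starLang m) m ∧ NSCeq ((starLang m)∗) m := by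
  obtain ⟨n, rfl⟩ : ∃ n, m = n + 1 := ⟨m - 1, by omega⟩
  haveI : NeZero n := ⟨by omega⟩
  refine ⟨?_, ⟨?_, ?_⟩, ⟨?_, ?_⟩⟩
  · -- SuffixFree
    rintro u v ⟨k, rfl⟩ ⟨l, rfl⟩ ⟨t, ht⟩
    cases t with
    | nil => simpa using ht
    | cons c t =>
      exfalso
      rw [List.cons_append] at ht
      injection ht with _ h2
      have h1 : (1 : Fin 2) ∈ List.replicate (l * (n + 1 - 1)) (0 : Fin 2) := by
        rw [← h2]
        exact List.mem_append_right _ (List.mem_cons_self)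
      exact absurd (List.eq_of_mem_replicate h1) (by decide)
  · -- NSCle L
    exact ⟨Option (Fin n), inferInstance, MA n, MA_accepts, by simp⟩
  · -- NSCge L
    refine nsc_lower hm _ (fun k => ⟨k, rfl⟩) (fun s _ => replicate_not_mem) ?_
    exact fun t hd h => hd (one_replicate_mem.1 h)
  · -- NSCle L*
    exact ⟨Option (Fin n), inferInstance, MB n, MB_accepts (by omega), by simp⟩
  · -- NSCge L*
    refine nsc_lower hm _
      (fun k => (one_replicate_mem_kstar hm).2 ⟨k, Nat.mul_comm _ _⟩) ?_
      (fun t hd h => hd ((one_replicate_mem_kstar hm).1 h))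
    intro s hs h
    rcases kstar_head h with h0 | ⟨w', hw'⟩
    · have := congrArg List.length h0
      simp at this
      omega
    · cases s with
      | zero => omega
      | succ s =>
        rw [List.replicate_succ] at hw'
        injection hw' with h1 _
        exact absurd h1 (by decide)
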